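/- Let a, b, c be integers with a ≠ 0 or b ≠ 0. The subgroup L = { (x,y) ∈ ℤ² : c ∣ a·x + b·y } of ℤ² has index |c| / gcd(a,b,c) in ℤ² when c ≠ 0; equivalently, any 2×2 integer matrix T whose columns generate L satisfies |det T| = |c| / gcd(a,b,c). -/

import Mathlib

open Matrix

/-- The subgroup `{(x, y) ∈ ℤ² : c ∣ a·x + b·y}` of `ℤ²`. -/
def dvdLattice (a b c : ℤ) : AddSubgroup (Fin 2 → ℤ) where
  carrier := {v | c ∣ a * v 0 + b * v 1}
  zero_mem' := by simp
  add_mem' := by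
    intro u v hu hv
    have := dvd_add hu hv
    simpa [mul_add, add_add_add_comm] using this
  neg_mem' := by
    intro v hv
    have : a * (-v) 0 + b * (-v) 1 = -(a * v 0 + b * v 1) := by
      simp [Pi.neg_apply]; ring
    rw [Set.mem_setOf_eq, this]
    exact hv.neg_right

lemma detC (S T : Matrix (Fin 2) (Fin 2) ℤ) (hS : S.det ≠ 0)
    (h : Set.range S.mulVec = Set.range T.mulVec) : T.det.natAbs = S.det.natAbs := by
  have hcol : ∀ (P Q : Matrix (Fin 2) (Fin 2) ℤ),
      Set.range P.mulVec = Set.range Q.mulVec → ∃ A, Q * A = P := by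
    intro P Q hPQ
    have : ∀ j, ∃ w, Q.mulVec w = fun i => P i j := by
      intro j
      have : (fun i => P i j) ∈ Set.range Q.mulVec := by
        rw [← hPQ]
        exact ⟨Pi.single j 1, by ext i; simp [Matrix.mulVec_single]⟩
      exact this
    choose w hw using this
    refine ⟨Matrix.of fun i j => w j i, ?_⟩
    ext i j
    have := congrFun (hw j) i
    simpa [Matrix.mul_apply, Matrix.mulVec, dotProduct] using this
  obtain ⟨A, hA⟩ := hcol T S h.symm
  obtain ⟨B, hB⟩ := hcol S T h
  have h1 : S * (A * B) = S := by rw [← Matrix.mul_assoc, hA, hB]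
  have h2 : S.det * (A.det * B.det) = S.det * 1 := by
    rw [mul_one]; nth_rewrite 2 [← h1]; rw [Matrix.det_mul, Matrix.det_mul]
  have h3 : A.det * B.det = 1 := mul_left_cancel₀ hS h2
  have h4 : A.det.natAbs = 1 := Int.isUnit_iff.mp (IsUnit.of_mul_eq_one _ h3) |>.elim
    (fun h => by simp [h]) (fun h => by simp [h])
  rw [← hA, Matrix.det_mul, Int.natAbs_mul, h4, mul_one]

lemma indexA (a b c : ℤ) (hc : c ≠ 0) :
    (dvdLattice a b c).index = c.natAbs / Int.gcd (Int.gcd a b) c := by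
  set n := c.natAbs with hn
  haveI : NeZero n := ⟨Int.natAbs_ne_zero.mpr hc⟩
  set f' : (Fin 2 → ℤ) →+ ℤ := AddMonoidHom.mk' (fun v => a * v 0 + b * v 1)
    (by intro u v; simp [Pi.add_apply]; ring) with hf'
  set φ : (Fin 2 → ℤ) →+ ZMod n := (Int.castAddHom (ZMod n)).comp f' with hφ
  have happ : ∀ v, φ v = ((a * v 0 + b * v 1 : ℤ) : ZMod n) := fun v => rfl
  have hker : dvdLattice a b c = φ.ker := by
    ext v
    rw [AddMonoidHom.mem_ker, happ, ZMod.intCast_zmod_eq_zero_iff_dvd, hn, Int.natAbs_dvd]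
    rfl
  have hrange : φ.range = AddSubgroup.zmultiples ((Int.gcd a b : ℤ) : ZMod n) := by
    ext x
    simp only [AddMonoidHom.mem_range, AddSubgroup.mem_zmultiples_iff]
    constructor
    · rintro ⟨v, rfl⟩
      have hd : (Int.gcd a b : ℤ) ∣ a * v 0 + b * v 1 :=
        dvd_add (Dvd.dvd.mul_right (Int.gcd_dvd_left a b) _) (Dvd.dvd.mul_right (Int.gcd_dvd_right a b) _)
      obtain ⟨k, hk⟩ := hd
      refine ⟨k, ?_⟩
      rw [happ, hk, zsmul_eq_mul]
      push_cast
      ring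
    · rintro ⟨k, rfl⟩
      refine ⟨k • ![Int.gcdA a b, Int.gcdB a b], ?_⟩
      rw [happ]
      have hbez : (Int.gcd a b : ℤ) = a * Int.gcdA a b + b * Int.gcdB a b := Int.gcd_eq_gcd_ab a b
      have h2 : a * (k • ![Int.gcdA a b, Int.gcdB a b]) 0 + b * (k • ![Int.gcdA a b, Int.gcdB a b]) 1
          = k * (Int.gcd a b : ℤ) := by
        simp only [Pi.smul_apply, Matrix.cons_val_zero, Matrix.cons_val_one, Matrix.head_cons,
          smul_eq_mul, hbez]
        ring
      rw [h2, zsmul_eq_mul]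
      push_cast
      ring
  rw [hker, AddSubgroup.index_ker, hrange, Nat.card_zmultiples]
  have : ((Int.gcd a b : ℤ) : ZMod n) = ((Int.gcd a b : ℕ) : ZMod n) := by push_cast; rfl
  rw [this, ZMod.addOrderOf_coe _ (NeZero.ne n)]
  congr 1
  simp [Int.gcd, Nat.gcd_comm, hn]

lemma existsT0 (a b c : ℤ) (hab : a ≠ 0 ∨ b ≠ 0) (hc : c ≠ 0) :
    ∃ T₀ : Matrix (Fin 2) (Fin 2) ℤ,
      Set.range T₀.mulVec = (dvdLattice a b c : Set (Fin 2 → ℤ)) ∧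
      T₀.det.natAbs = c.natAbs / Int.gcd (Int.gcd a b) c := by
  set g : ℤ := (Int.gcd a b : ℤ) with hgdef
  have hgpos : 0 < Int.gcd a b := Int.gcd_pos_iff.mpr (by tauto)
  have hg0 : g ≠ 0 := by positivity
  set a' : ℤ := a / g with ha'def
  set b' : ℤ := b / g with hb'def
  have hga : g ∣ a := Int.gcd_dvd_left a b
  have hgb : g ∣ b := Int.gcd_dvd_right a b
  have ha : g * a' = a := Int.mul_ediv_cancel' hga
  have hb : g * b' = b := Int.mul_ediv_cancel' hgb
  have hcop : Int.gcd a' b' = 1 := Int.gcd_div_gcd_div_gcd hgpos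
  set p : ℤ := Int.gcdA a' b' with hpdef
  set q : ℤ := Int.gcdB a' b' with hqdef
  have hpq : a' * p + b' * q = 1 := by
    have := Int.gcd_eq_gcd_ab a' b'
    rw [hcop] at this
    exact_mod_cast this.symm
  set d : ℤ := (Int.gcd g c : ℤ) with hddef
  have hdg : d ∣ g := Int.gcd_dvd_left g c
  have hdc : d ∣ c := Int.gcd_dvd_right g c
  have hd0 : d ≠ 0 := by
    have : 0 < Int.gcd g c := Int.gcd_pos_iff.mpr (Or.inr hc)
    positivity
  set e : ℤ := c / d with hedef
  have hde : d * e = c := Int.mul_ediv_cancel' hdc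
  have hcge : c ∣ g * e := by
    obtain ⟨k, hk⟩ := hdg
    exact ⟨k, by rw [hk, ← hde]; ring⟩
  refine ⟨!![p * e, -b'; q * e, a'], ?_, ?_⟩
  · ext v
    constructor
    · rintro ⟨w, rfl⟩
      show c ∣ _
      have h0 : (!![p * e, -b'; q * e, a']).mulVec w 0 = p * e * w 0 + (-b') * w 1 := by
        simp [Matrix.mulVec, dotProduct, Fin.sum_univ_two]
      have h1 : (!![p * e, -b'; q * e, a']).mulVec w 1 = q * e * w 0 + a' * w 1 := by
        simp [Matrix.mulVec, dotProduct, Fin.sum_univ_two]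
      rw [h0, h1]
      have key : a * (p * e * w 0 + (-b') * w 1) + b * (q * e * w 0 + a' * w 1)
          = (g * e) * w 0 := by
        rw [← ha, ← hb]
        linear_combination (g * e * w 0) * hpq
      rw [key]
      exact hcge.mul_right _
    · intro hv
      have hv' : c ∣ a * v 0 + b * v 1 := hv
      have hgs : c ∣ g * (a' * v 0 + b' * v 1) := by
        obtain ⟨k, hk⟩ := hv'
        refine ⟨k, ?_⟩
        rw [← hk, ← ha, ← hb]; ring
      have hes : e ∣ (a' * v 0 + b' * v 1) := by
        obtain ⟨k, hk⟩ := hgs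
        have h1 : d * ((g/d) * (a' * v 0 + b' * v 1)) = d * (e * k) := by
          rw [← mul_assoc, Int.mul_ediv_cancel' hdg, hk, ← hde]; ring
        have h2 : (g/d) * (a' * v 0 + b' * v 1) = e * k := mul_left_cancel₀ hd0 h1
        have hcop2 : Int.gcd e (g/d) = 1 := by
          rw [Int.gcd_comm, hedef, hddef]
          exact Int.gcd_div_gcd_div_gcd (Int.gcd_pos_iff.mpr (Or.inr hc))
        have : IsCoprime e (g/d) := Int.isCoprime_iff_gcd_eq_one.mpr hcop2
        exact this.dvd_of_dvd_mul_left ⟨k, h2⟩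
      obtain ⟨m, hm⟩ := hes
      refine ⟨![m, -q * v 0 + p * v 1], ?_⟩
      funext i
      fin_cases i
      · simp only [Matrix.mulVec, dotProduct, Fin.sum_univ_two, Matrix.of_apply,
          Matrix.cons_val', Matrix.cons_val_zero, Matrix.cons_val_one, Matrix.head_cons,
          Matrix.empty_val', Matrix.cons_val_fin_one, Matrix.head_fin_const, Fin.isValue, Fin.mk_zero, Fin.mk_one]
        linear_combination (-p) * hm + v 0 * hpq
      · simp only [Matrix.mulVec, dotProduct, Fin.sum_univ_two, Matrix.of_apply,
          Matrix.cons_val', Matrix.cons_val_zero, Matrix.cons_val_one, Matrix.head_cons,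
          Matrix.empty_val', Matrix.cons_val_fin_one, Matrix.head_fin_const, Fin.isValue, Fin.mk_zero, Fin.mk_one]
        linear_combination (-q) * hm + v 1 * hpq
  · rw [Matrix.det_fin_two_of]
    have : p * e * a' - (-b') * (q * e) = e := by linear_combination e * hpq
    rw [this, hedef, Int.natAbs_ediv_of_dvd hdc]
    congr 1

theorem index_dvdLattice (a b c : ℤ) (hab : a ≠ 0 ∨ b ≠ 0) (hc : c ≠ 0) :
    (dvdLattice a b c).index = c.natAbs / Int.gcd (Int.gcd a b) c ∧
    ∀ T : Matrix (Fin 2) (Fin 2) ℤ,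
      Set.range T.mulVec = (dvdLattice a b c : Set (Fin 2 → ℤ)) →
      T.det.natAbs = c.natAbs / Int.gcd (Int.gcd a b) c := by
  have hA := indexA a b c hc
  obtain ⟨T₀, hT₀, hdetT₀⟩ := existsT0 a b c hab hc
  refine ⟨hA, fun T hT => ?_⟩
  have hrhs : c.natAbs / Int.gcd (Int.gcd a b) c ≠ 0 := by
    have h1 : Int.gcd (Int.gcd a b) c ∣ c.natAbs := Nat.gcd_dvd_right _ _
    have h2 : 0 < Int.gcd (Int.gcd a b) c := Int.gcd_pos_iff.mpr (Or.inr hc)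
    have h3 : 0 < c.natAbs := Int.natAbs_pos.mpr hc
    have := Nat.div_pos (Nat.le_of_dvd h3 h1) h2
    omega
  have hT₀det : T₀.det ≠ 0 := by
    intro h0
    rw [h0] at hdetT₀
    simp at hdetT₀
    exact hrhs hdetT₀.symm
  rw [detC T₀ T hT₀det (hT₀.trans hT.symm), hdetT₀]
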